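/- arXiv:math/0201088 — 4 statements merged into one kernel-verified Lean document; each statement's English description precedes it below -/
import Mathlib

section
/- For a bounded domain D in ℂⁿ and a point z₀ ∈ ∂D, define L(z₀) as the set of vectors X ∈ ℂⁿ such that there exists ε > 0 with z₀ + λX ∈ ∂D for all complex λ with |λ| ≤ ε. If D is convex, then L(z₀) is a complex linear subspace of ℂⁿ. -/
open Metric

/-- For a bounded convex domain `D ⊆ ℂⁿ` and `z₀ ∈ ∂D`, the set
`L(z₀) = {X | ∃ ε > 0, ∀ λ, ‖λ‖ ≤ ε → z₀ + λ • X ∈ ∂D}` is a complex linear subspace. -/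
theorem stmt0 {n : ℕ} (D : Set (EuclideanSpace ℂ (Fin n)))
    (hDo : IsOpen D) (hDne : D.Nonempty) (hDc : Convex ℝ D)
    (hDb : Bornology.IsBounded D)
    (z₀ : EuclideanSpace ℂ (Fin n)) (hz₀ : z₀ ∈ frontier D) :
    ∃ S : Submodule ℂ (EuclideanSpace ℂ (Fin n)),
      (S : Set (EuclideanSpace ℂ (Fin n))) =
        {X | ∃ ε > (0 : ℝ), ∀ l : ℂ, ‖l‖ ≤ ε → z₀ + l • X ∈ frontier D} := by
  have hz₀i : z₀ ∉ interior D := by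
    rw [← closure_diff_interior] at hz₀; exact hz₀.2
  set F : Set (EuclideanSpace ℂ (Fin n)) :=
    {X | ∃ ε > (0 : ℝ), ∀ l : ℂ, ‖l‖ ≤ ε → z₀ + l • X ∈ frontier D} with hF
  refine ⟨{ carrier := F
            zero_mem' := ⟨1, one_pos, fun l _ => by simpa using hz₀⟩
            smul_mem' := ?_
            add_mem' := ?_ }, rfl⟩
  · rintro X Y ⟨ε₁, hε₁, hX⟩ ⟨ε₂, hε₂, hY⟩
    refine ⟨min ε₁ ε₂ / 2, by positivity, fun l hl => ?_⟩
    have h2l : ∀ m : ℂ, ‖m‖ ≤ ‖l‖ → ‖2 * m‖ ≤ min ε₁ ε₂ := by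
      intro m hm
      rw [norm_mul]
      calc ‖(2 : ℂ)‖ * ‖m‖ ≤ 2 * ‖l‖ := by
            rw [Complex.norm_ofNat]; exact mul_le_mul_of_nonneg_left hm (by norm_num)
        _ ≤ 2 * (min ε₁ ε₂ / 2) := by linarith
        _ = min ε₁ ε₂ := by ring
    have key : ∀ m : ℂ, ‖m‖ ≤ ‖l‖ → z₀ + m • (X + Y) ∈ closure D := by
      intro m hm
      have hmX : z₀ + (2 * m) • X ∈ closure D :=
        frontier_subset_closure (hX _ (le_trans (h2l m hm) (min_le_left _ _)))
      have hmY : z₀ + (2 * m) • Y ∈ closure D :=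
        frontier_subset_closure (hY _ (le_trans (h2l m hm) (min_le_right _ _)))
      have hcomb := hDc.closure hmX hmY (by norm_num : (0:ℝ) ≤ 1/2)
        (by norm_num : (0:ℝ) ≤ 1/2) (by norm_num)
      have heq : (1/2 : ℝ) • (z₀ + (2 * m) • X) + (1/2 : ℝ) • (z₀ + (2 * m) • Y)
          = z₀ + m • (X + Y) := by module
      rwa [heq] at hcomb
    rw [← closure_diff_interior]
    refine ⟨key l le_rfl, fun hm => ?_⟩
    have hm' : z₀ + (-l) • (X + Y) ∈ closure D := key (-l) (by simp)
    have hcomb := hDc.combo_interior_closure_mem_interior hm hm'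
      (by norm_num : (0:ℝ) < 1/2) (by norm_num : (0:ℝ) ≤ 1/2) (by norm_num)
    have heq : (1/2 : ℝ) • (z₀ + l • (X + Y)) + (1/2 : ℝ) • (z₀ + (-l) • (X + Y)) = z₀ := by module
    rw [heq] at hcomb
    exact hz₀i hcomb
  · rintro c X ⟨ε, hε, hX⟩
    by_cases hc : c = 0
    · exact ⟨1, one_pos, fun l _ => by simpa [hc] using hz₀⟩
    · refine ⟨ε / ‖c‖, div_pos hε (norm_pos_iff.2 hc), fun l hl => ?_⟩
      have : ‖l * c‖ ≤ ε := by
        rw [norm_mul]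
        calc ‖l‖ * ‖c‖ ≤ (ε / ‖c‖) * ‖c‖ :=
              mul_le_mul_of_nonneg_right hl (norm_nonneg _)
          _ = ε := div_mul_cancel₀ ε (norm_ne_zero_iff.2 hc)
      simpa [smul_smul] using hX (l * c) this
end

section
/- Let D ⊂ ℂⁿ be a convex open set, let L = {z : z₁ = ⋯ = z_k = 0} and suppose {0'} × Δ''_c ⊂ ∂D, where Δ''_c ⊂ ℂ^{n-k} is the polydisc of radius c centered at 0. If α > 1 and E_α := {z ∈ ℂᵏ × {0} : αz ∈ D ∩ (ℂᵏ × {0})}, then F_α × Δ''_ε ⊂ D where ε = c(1 − 1/α) and F_α is the projection of E_α to ℂᵏ. -/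
open Metric

/-- If the convex open set `D ⊆ ℂᵏ × ℂᵐ` has `{0} × Δ''_c` in its boundary, `α > 1`,
and `F_α = {z' | (α z', 0) ∈ D}`, then `F_α × Δ''_ε ⊆ D` with `ε = c (1 - 1/α)`. -/
theorem stmt2 {k m : ℕ}
    (D : Set (EuclideanSpace ℂ (Fin k) × EuclideanSpace ℂ (Fin m)))
    (hDo : IsOpen D) (hDc : Convex ℝ D)
    (c : ℝ) (hc : 0 < c)
    (hbdry : ∀ w : EuclideanSpace ℂ (Fin m), (∀ j, ‖w j‖ < c) →
      ((0 : EuclideanSpace ℂ (Fin k)), w) ∈ frontier D)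
    (α : ℝ) (hα : 1 < α) :
    ∀ z' : EuclideanSpace ℂ (Fin k), ((α : ℂ) • z', (0 : EuclideanSpace ℂ (Fin m))) ∈ D →
      ∀ w : EuclideanSpace ℂ (Fin m), (∀ j, ‖w j‖ < c * (1 - 1 / α)) →
        (z', w) ∈ D := by
  intro z' hz' w hw
  have hα0 : (0:ℝ) < α := lt_trans one_pos hα
  have hb : (0:ℝ) < 1 - 1/α := by
    have : 1/α < 1 := by rw [div_lt_one hα0]; exact hα
    linarith
  set a : ℝ := 1/α with ha_def
  have ha : 0 < a := by positivity
  set v : EuclideanSpace ℂ (Fin m) := ((1 - 1/α : ℝ) : ℂ)⁻¹ • w with hv_def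
  have hvnorm : ∀ j, ‖v j‖ < c := by
    intro j
    have h1 : ‖v j‖ = (1 - 1/α)⁻¹ * ‖w j‖ := by
      rw [hv_def]
      rw [PiLp.smul_apply, smul_eq_mul, norm_mul, norm_inv, Complex.norm_real, Real.norm_eq_abs, abs_of_pos hb]
    rw [h1]
    have := hw j
    calc (1 - 1/α)⁻¹ * ‖w j‖ < (1 - 1/α)⁻¹ * (c * (1 - 1/α)) :=
          mul_lt_mul_of_pos_left this (by positivity)
      _ = c := by rw [mul_comm c, ← mul_assoc, inv_mul_cancel₀ hb.ne', one_mul]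
  have hvcl : ((0 : EuclideanSpace ℂ (Fin k)), v) ∈ closure D :=
    frontier_subset_closure (hbdry v hvnorm)
  have hmem := hDc.combo_interior_closure_mem_interior
    (by rwa [hDo.interior_eq] : ((α : ℂ) • z', (0 : EuclideanSpace ℂ (Fin m))) ∈ interior D)
    hvcl ha hb.le (by ring)
  rw [hDo.interior_eq] at hmem
  have h1 : a • ((α : ℂ) • z') = z' := by
    rw [← Complex.coe_smul, smul_smul,
      show ((a : ℂ) * α) = 1 by
        push_cast [ha_def]
        field_simp
        exact div_self (by exact_mod_cast hα0.ne'),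
      one_smul]
  have h2 : (1 - a) • v = w := by
    rw [hv_def, ← Complex.coe_smul, smul_smul,
      show (((1 - a : ℝ) : ℂ) * ((1 - 1/α : ℝ) : ℂ)⁻¹) = 1 by
        rw [ha_def, mul_inv_cancel₀]
        exact_mod_cast hb.ne',
      one_smul]
  have heq : a • ((α : ℂ) • z', (0 : EuclideanSpace ℂ (Fin m)))
      + (1 - a) • ((0 : EuclideanSpace ℂ (Fin k)), v) = (z', w) := by
    rw [Prod.smul_mk, Prod.smul_mk, Prod.mk_add_mk, smul_zero, smul_zero, add_zero,
      zero_add, h1, h2]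
  rwa [heq] at hmem
end

section
/- Let D ⊂ ℂⁿ be a bounded convex domain and z₀ ∈ ∂D with L(z₀) = {0}. Then there is no nonconstant analytic curve in the closure of D passing through z₀; i.e., if φ : 𝔻 → closure(D) is holomorphic with φ(0) = z₀, then φ is constant. -/
open Metric

/-- A holomorphic function on the unit disc with nonpositive real part vanishing at the
origin is identically zero. -/
lemma halfplane_zero {h : ℂ → ℂ} (hd : DifferentiableOn ℂ h (ball 0 1))
    (hre : ∀ z ∈ ball (0 : ℂ) 1, (h z).re ≤ 0) (h0 : h 0 = 0) :
    ∀ z ∈ ball (0 : ℂ) 1, h z = 0 := by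
  set u : ℂ → ℂ := fun z => (1 + h z) / (1 - h z) with hu
  have hne : ∀ z ∈ ball (0 : ℂ) 1, 1 - h z ≠ 0 := by
    intro z hz hc
    have h1 := hre z hz
    rw [sub_eq_zero] at hc
    rw [← hc] at h1
    norm_num at h1
  have hdu : DifferentiableOn ℂ u (ball 0 1) :=
    ((differentiableOn_const 1).add hd).div ((differentiableOn_const 1).sub hd) hne
  have hub : ∀ z ∈ ball (0 : ℂ) 1, ‖u z‖ ≤ 1 := by
    intro z hz
    have hsq : ‖1 + h z‖ ^ 2 ≤ ‖1 - h z‖ ^ 2 := by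
      have h1 := hre z hz
      simp only [Complex.sq_norm, Complex.normSq_apply, Complex.add_re,
        Complex.add_im, Complex.sub_re, Complex.sub_im, Complex.one_re, Complex.one_im]
      nlinarith
    have hpos : 0 < ‖1 - h z‖ := norm_pos_iff.2 (hne z hz)
    rw [hu]
    simp only [norm_div]
    rw [div_le_one hpos]
    nlinarith [norm_nonneg (1 + h z), norm_nonneg (1 - h z)]
  have hu0 : u 0 = 1 := by simp [hu, h0]
  have hmax : IsMaxOn (norm ∘ u) (ball 0 1) 0 := by
    intro z hz
    simp only [Function.comp_apply, hu0, norm_one, Set.mem_setOf_eq]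
    exact hub z hz
  have heq := Complex.eqOn_of_isPreconnected_of_isMaxOn_norm
    (convex_ball (0 : ℂ) 1).isPreconnected isOpen_ball hdu (mem_ball_self one_pos) hmax
  intro z hz
  have huz : u z = 1 := by simpa [hu0] using heq hz
  have hnz := hne z hz
  rw [hu] at huz
  field_simp at huz
  -- huz : 1 + h z = 1 - h z
  have : (2 : ℂ) * h z = 0 := by linear_combination huz
  simpa using this

/-- Supporting functional at a non-interior point of a convex set containing `0`. -/
lemma support_exists {V : Type*} [NormedAddCommGroup V] [NormedSpace ℝ V]
    [FiniteDimensional ℝ V] {C : Set V} (hC : Convex ℝ C) (h0 : (0 : V) ∈ C)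
    (hni : (0 : V) ∉ interior C) :
    ∃ f : V →L[ℝ] ℝ, (∃ a, f a ≠ 0) ∧ ∀ a ∈ C, f a ≤ 0 := by
  by_cases hne : (interior C).Nonempty
  · obtain ⟨f, hf⟩ := geometric_hahn_banach_open_point hC.interior isOpen_interior hni
    have hf' : ∀ a ∈ interior C, f a < 0 := by
      intro a ha; have := hf a ha; simpa using this
    obtain ⟨x, hx⟩ := hne
    refine ⟨f, ⟨x, (hf' x hx).ne⟩, ?_⟩
    intro a ha
    have key : Filter.Tendsto (fun t : ℝ => f (t • x + (1 - t) • a))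
        (nhdsWithin 0 (Set.Ioi 0)) (nhds (f a)) := by
      have hc : Continuous fun t : ℝ => f (t • x + (1 - t) • a) := by fun_prop
      have := hc.tendsto 0
      simp only [zero_smul, sub_zero, one_smul, zero_add] at this
      exact this.mono_left nhdsWithin_le_nhds
    refine le_of_tendsto key ?_
    filter_upwards [Ioo_mem_nhdsGT_of_mem (Set.left_mem_Ico.2 one_pos)] with t ht
    exact (hf' _ (hC.combo_interior_closure_mem_interior hx (subset_closure ha) ht.1
      (by linarith [ht.2]) (by ring))).le
  · rw [Set.not_nonempty_iff_eq_empty] at hne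
    have hspan : Submodule.span ℝ C ≠ ⊤ := by
      intro hs
      have hsub : C ⊆ C -ᵥ C := by
        intro x hx
        have := Set.vsub_mem_vsub hx h0
        simpa using this
      have hvs : vectorSpan ℝ C = ⊤ := by
        rw [eq_top_iff, ← hs]
        rw [vectorSpan_def]
        exact Submodule.span_mono hsub
      have htop : affineSpan ℝ C = ⊤ :=
        (AffineSubspace.affineSpan_eq_top_iff_vectorSpan_eq_top_of_nonempty ℝ V V ⟨0, h0⟩).2 hvs
      have := hC.interior_nonempty_iff_affineSpan_eq_top.2 htop
      rw [hne] at this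
      exact Set.not_nonempty_empty this
    obtain ⟨g, gne, hmap⟩ := Submodule.exists_dual_map_eq_bot_of_lt_top
      (lt_top_iff_ne_top.2 hspan) inferInstance
    obtain ⟨a, ha⟩ := DFunLike.ne_iff.1 gne
    refine ⟨LinearMap.toContinuousLinearMap g, ⟨a, by simpa using ha⟩, ?_⟩
    intro b hb
    have : g b ∈ (Submodule.span ℝ C).map g := ⟨b, Submodule.subset_span hb, rfl⟩
    rw [hmap] at this
    simp only [Submodule.mem_bot] at this
    simp [LinearMap.coe_toContinuousLinearMap', this]

lemma re_extend {E : Type*} [NormedAddCommGroup E] [NormedSpace ℂ E]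
    (f : E →L[ℝ] ℝ) (x : E) : (f.extendTo𝕜' x : ℂ).re = f x := by
  have := f.toLinearMap.extendTo𝕜'_apply_re (𝕜 := ℂ) x
  exact this

lemma stmt10_key {n : ℕ} (D : Set (EuclideanSpace ℂ (Fin n)))
    (hDo : IsOpen D) (hDc : Convex ℝ D)
    (z₀ : EuclideanSpace ℂ (Fin n)) (hz₀c : z₀ ∈ closure D)
    (hL : {X : EuclideanSpace ℂ (Fin n) |
      ∃ ε > (0 : ℝ), ∀ l : ℂ, ‖l‖ ≤ ε → z₀ + l • X ∈ frontier D} = {0})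
    (φ : ℂ → EuclideanSpace ℂ (Fin n))
    (hφ : DifferentiableOn ℂ φ (ball (0 : ℂ) 1))
    (hφD : Set.MapsTo φ (ball (0 : ℂ) 1) (closure D))
    (hφ0 : φ 0 = z₀) :
    ∀ (k : ℕ) (W : Submodule ℂ (EuclideanSpace ℂ (Fin n))),
      Module.finrank ℂ W ≤ k → (∀ X ∈ W, z₀ + X ∉ D) →
      (∀ z ∈ ball (0 : ℂ) 1, φ z - z₀ ∈ W) → ∀ w ∈ ball (0 : ℂ) 1, φ w = z₀ := by
  intro k
  induction k with
  | zero =>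
    intro W hfin _ hmem w hw
    have hW : W = ⊥ := Submodule.finrank_eq_zero.mp (Nat.le_zero.1 hfin)
    have := hmem w hw
    rw [hW, Submodule.mem_bot, sub_eq_zero] at this
    exact this
  | succ k ih =>
    intro W hfin hinv hmem
    by_cases hbot : W = ⊥
    · intro w hw
      have := hmem w hw
      rw [hbot, Submodule.mem_bot, sub_eq_zero] at this
      exact this
    by_cases hcase : ∃ ε > (0 : ℝ), ∀ X ∈ W, ‖X‖ ≤ ε → z₀ + X ∈ closure D
    · exfalso
      obtain ⟨ε, hε, hcl⟩ := hcase
      obtain ⟨X₀, hX₀W, hX₀ne⟩ := Submodule.exists_mem_ne_zero_of_ne_bot hbot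
      set X : EuclideanSpace ℂ (Fin n) := ((ε / ‖X₀‖ : ℝ) : ℂ) • X₀ with hX
      have hXW : X ∈ W := W.smul_mem _ hX₀W
      have hX₀pos : 0 < ‖X₀‖ := norm_pos_iff.2 hX₀ne
      have hXnorm : ‖X‖ = ε := by
        rw [hX, norm_smul]
        simp only [Complex.norm_real, Real.norm_eq_abs]
        rw [abs_of_nonneg (by positivity), div_mul_cancel₀ _ hX₀pos.ne']
      have hmemL : X ∈ {X : EuclideanSpace ℂ (Fin n) |
          ∃ ε > (0 : ℝ), ∀ l : ℂ, ‖l‖ ≤ ε → z₀ + l • X ∈ frontier D} := by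
        refine ⟨1, one_pos, fun l hl => ?_⟩
        have hlXW : l • X ∈ W := W.smul_mem l hXW
        have hcls : z₀ + l • X ∈ closure D := by
          apply hcl _ hlXW
          rw [norm_smul, hXnorm]
          nlinarith [norm_nonneg l]
        have hnot : z₀ + l • X ∉ D := hinv _ hlXW
        exact ⟨hcls, by rwa [hDo.interior_eq]⟩
      rw [hL, Set.mem_singleton_iff] at hmemL
      rw [hmemL, norm_zero] at hXnorm
      exact hε.ne hXnorm
    · push_neg at hcase
      set C : Set ↥W := {X : ↥W | z₀ + (X : EuclideanSpace ℂ (Fin n)) ∈ closure D} with hCdef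
      have hCc : Convex ℝ C := by
        intro X hX Y hY a b ha hb hab
        have h1 := hDc.closure hX hY ha hb hab
        show z₀ + ((a • X + b • Y : ↥W) : EuclideanSpace ℂ (Fin n)) ∈ closure D
        have : z₀ + ((a • X + b • Y : ↥W) : EuclideanSpace ℂ (Fin n))
            = a • (z₀ + (X : EuclideanSpace ℂ (Fin n))) + b • (z₀ + (Y : EuclideanSpace ℂ (Fin n))) := by
          have hz : a • z₀ + b • z₀ = z₀ := Convex.combo_self hab z₀
          push_cast
          rw [smul_add, smul_add, add_add_add_comm, hz]
        rw [this]
        exact h1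
      have h0C : (0 : ↥W) ∈ C := by
        show z₀ + ((0 : ↥W) : EuclideanSpace ℂ (Fin n)) ∈ closure D
        simpa using hz₀c
      have hniC : (0 : ↥W) ∉ interior C := by
        intro hint
        rw [mem_interior_iff_mem_nhds, Metric.mem_nhds_iff] at hint
        obtain ⟨δ, hδ, hball⟩ := hint
        obtain ⟨Y, hYW, hYn, hYnc⟩ := hcase (δ / 2) (by positivity)
        have : (⟨Y, hYW⟩ : ↥W) ∈ ball (0 : ↥W) δ := by
          rw [mem_ball_zero_iff]
          calc ‖(⟨Y, hYW⟩ : ↥W)‖ = ‖Y‖ := rfl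
          _ ≤ δ / 2 := hYn
          _ < δ := by linarith
        exact hYnc (hball this)
      obtain ⟨f, ⟨a₀, ha₀⟩, hfle⟩ := support_exists hCc h0C hniC
      set F : EuclideanSpace ℂ (Fin n) →L[ℝ] ℝ :=
        f.comp ((W.orthogonalProjectionOnto).restrictScalars ℝ) with hF
      set G : EuclideanSpace ℂ (Fin n) →L[ℂ] ℂ := F.extendTo𝕜' with hG
      have hGre : ∀ x : EuclideanSpace ℂ (Fin n), (G x).re = F x := fun x => re_extend F x
      have hproj : ∀ x : EuclideanSpace ℂ (Fin n), (hx : x ∈ W) →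
          W.orthogonalProjectionOnto x = ⟨x, hx⟩ := by
        intro x hx
        exact W.orthogonalProjectionOnto_mem_subspace_eq_self ⟨x, hx⟩
      have hh : ∀ z ∈ ball (0 : ℂ) 1, G (φ z - z₀) = 0 := by
        apply halfplane_zero
        · exact (G.differentiable.comp_differentiableOn (hφ.sub_const z₀))
        · intro z hz
          rw [hGre]
          have hmz := hmem z hz
          rw [hF]
          simp only [ContinuousLinearMap.coe_comp', Function.comp_apply,
            ContinuousLinearMap.coe_restrictScalars']
          rw [hproj _ hmz]
          apply hfle
          show z₀ + (φ z - z₀) ∈ closure D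
          rw [add_sub_cancel]
          exact hφD hz
        · rw [hφ0, sub_self, map_zero]
      set W' : Submodule ℂ (EuclideanSpace ℂ (Fin n)) :=
        W ⊓ LinearMap.ker (G : EuclideanSpace ℂ (Fin n) →ₗ[ℂ] ℂ) with hW'
      have hlt : W' < W := by
        rw [lt_iff_le_and_ne]
        refine ⟨inf_le_left, ?_⟩
        intro heq
        have ha₀W : (a₀ : EuclideanSpace ℂ (Fin n)) ∈ W := a₀.2
        have : (a₀ : EuclideanSpace ℂ (Fin n)) ∈ W' := by rw [heq]; exact ha₀W
        have hker : G (a₀ : EuclideanSpace ℂ (Fin n)) = 0 := (Submodule.mem_inf.1 this).2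
        apply ha₀
        have := hGre (a₀ : EuclideanSpace ℂ (Fin n))
        rw [show G ((a₀ : EuclideanSpace ℂ (Fin n))) = 0 from hker] at this
        rw [hF] at this
        simp only [ContinuousLinearMap.coe_comp', Function.comp_apply,
          ContinuousLinearMap.coe_restrictScalars'] at this
        rw [hproj _ a₀.2] at this
        simpa using this.symm
      have hfin' : Module.finrank ℂ W' ≤ k := by
        have := Submodule.finrank_lt_finrank_of_lt hlt
        omega
      apply ih W' hfin'
      · intro Y hY
        exact hinv Y hY.1
      · intro z hz
        exact Submodule.mem_inf.2 ⟨hmem z hz, LinearMap.mem_ker.2 (hh z hz)⟩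

/-- If `D` is a bounded convex domain, `z₀ ∈ ∂D` and `L(z₀) = {0}`, then every analytic
disc `φ : 𝔻 → closure D` with `φ(0) = z₀` is constant. -/
theorem stmt10 {n : ℕ} (D : Set (EuclideanSpace ℂ (Fin n)))
    (hDo : IsOpen D) (hDne : D.Nonempty) (hDc : Convex ℝ D)
    (hDb : Bornology.IsBounded D)
    (z₀ : EuclideanSpace ℂ (Fin n)) (hz₀ : z₀ ∈ frontier D)
    (hL : {X : EuclideanSpace ℂ (Fin n) |
      ∃ ε > (0 : ℝ), ∀ l : ℂ, ‖l‖ ≤ ε → z₀ + l • X ∈ frontier D} = {0})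
    (φ : ℂ → EuclideanSpace ℂ (Fin n))
    (hφ : DifferentiableOn ℂ φ (ball (0 : ℂ) 1))
    (hφD : Set.MapsTo φ (ball (0 : ℂ) 1) (closure D))
    (hφ0 : φ 0 = z₀) :
    ∀ w ∈ ball (0 : ℂ) 1, φ w = z₀ := by
  have hz₀D : z₀ ∉ D := by
    have := hz₀.2
    rwa [hDo.interior_eq] at this
  obtain ⟨f₀, hf₀⟩ := geometric_hahn_banach_open_point hDc hDo hz₀D
  set G₀ : EuclideanSpace ℂ (Fin n) →L[ℂ] ℂ := f₀.extendTo𝕜' with hG₀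
  have hle : ∀ x ∈ closure D, f₀ x ≤ f₀ z₀ := fun x hx =>
    closure_minimal (fun a ha => (hf₀ a ha).le)
      (isClosed_le f₀.continuous continuous_const) hx
  have hh : ∀ z ∈ ball (0 : ℂ) 1, G₀ (φ z - z₀) = 0 := by
    apply halfplane_zero
    · exact G₀.differentiable.comp_differentiableOn (hφ.sub_const z₀)
    · intro z hz
      rw [map_sub, Complex.sub_re]
      have e1 : (G₀ (φ z)).re = f₀ (φ z) := re_extend f₀ (φ z)
      have e2 : (G₀ z₀).re = f₀ z₀ := re_extend f₀ z₀
      rw [e1, e2]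
      have := hle _ (hφD hz)
      linarith
    · rw [hφ0, sub_self, map_zero]
  set W₀ : Submodule ℂ (EuclideanSpace ℂ (Fin n)) :=
    LinearMap.ker (G₀ : EuclideanSpace ℂ (Fin n) →ₗ[ℂ] ℂ) with hW₀
  apply stmt10_key D hDo hDc z₀ hz₀.1 hL φ hφ hφD hφ0 (Module.finrank ℂ W₀) W₀ le_rfl
  · intro X hX hXD
    have h1 := hf₀ _ hXD
    have h2 : f₀ X = 0 := by
      have hker : G₀ X = 0 := hX
      have := re_extend f₀ X
      rw [show (f₀.extendTo𝕜' X : ℂ) = G₀ X from rfl, hker] at this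
      simpa using this.symm
    rw [map_add, h2, add_zero] at h1
    exact lt_irrefl _ h1
  · intro z hz
    exact LinearMap.mem_ker.2 (hh z hz)
end

section
/- Let D ⊂ ℂⁿ be a bounded convex domain and z₀ ∈ ∂D a peak point for A⁰(D) (i.e. there exists f holomorphic on D, continuous on closure(D), with f(z₀) = 1 and |f(z)| < 1 for all z ∈ closure(D) \ {z₀}). Then L(z₀) = {0}. -/
/-- If `z₀ ∈ ∂D` is a peak point for `A⁰(D)` of a bounded convex domain `D`,
then `L(z₀) = {0}`. -/
theorem stmt11 {n : ℕ} (D : Set (EuclideanSpace ℂ (Fin n)))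
    (hDo : IsOpen D) (hDne : D.Nonempty) (hDc : Convex ℝ D)
    (hDb : Bornology.IsBounded D)
    (z₀ : EuclideanSpace ℂ (Fin n)) (hz₀ : z₀ ∈ frontier D)
    (f : EuclideanSpace ℂ (Fin n) → ℂ)
    (hf : DifferentiableOn ℂ f D) (hfc : ContinuousOn f (closure D))
    (hfz₀ : f z₀ = 1)
    (hpeak : ∀ z ∈ closure D, z ≠ z₀ → ‖f z‖ < 1) :
    {X : EuclideanSpace ℂ (Fin n) |
      ∃ ε > (0 : ℝ), ∀ l : ℂ, ‖l‖ ≤ ε → z₀ + l • X ∈ frontier D} = {0} := by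
  ext X
  simp only [Set.mem_setOf_eq, Set.mem_singleton_iff]
  constructor
  · rintro ⟨ε, hε, hX⟩
    by_contra hX0
    obtain ⟨w, hw⟩ := hDne
    set p : ℂ → EuclideanSpace ℂ (Fin n) := fun l => z₀ + l • X with hpdef
    have hpmem : ∀ l : ℂ, ‖l‖ ≤ ε → p l ∈ closure D := fun l hl =>
      frontier_subset_closure (hX l hl)
    -- bound
    obtain ⟨r, hr⟩ := hDb.closure.subset_closedBall 0
    have hwr : ‖w‖ ≤ r := by
      have := hr (subset_closure hw); simpa [Metric.mem_closedBall] using this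
    have hrnn : (0:ℝ) ≤ r := le_trans (norm_nonneg _) hwr
    -- uniform continuity
    have hcpt : IsCompact (closure D) := hDb.isCompact_closure
    have huc := hcpt.uniformContinuousOn_of_continuous hfc
    rw [Metric.uniformContinuousOn_iff] at huc
    set t : ℕ → ℝ := fun k => 1 / ((k:ℝ) + 2) with htdef
    have ht0 : ∀ k, 0 < t k := fun k => by positivity
    have ht1 : ∀ k, t k < 1 := fun k => by
      rw [htdef]; rw [div_lt_one (by positivity)]
      have : (0:ℝ) ≤ (k:ℝ) := Nat.cast_nonneg k
      linarith
    have httend : Filter.Tendsto t Filter.atTop (nhds 0) := by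
      have h1 : Filter.Tendsto (fun k : ℕ => (k:ℝ) + 2) Filter.atTop Filter.atTop :=
        Filter.tendsto_atTop_add_const_right _ 2 tendsto_natCast_atTop_atTop
      have := tendsto_inv_atTop_zero.comp h1
      simpa [htdef, Function.comp_def, one_div] using this
    set c : ℕ → ℂ → EuclideanSpace ℂ (Fin n) := fun k l => (1 - t k) • p l + t k • w
      with hcdef
    have hmemD : ∀ k, ∀ l : ℂ, ‖l‖ ≤ ε → c k l ∈ D := by
      intro k l hl
      have hseg : c k l ∈ openSegment ℝ (p l) w :=
        ⟨1 - t k, t k, by linarith [ht1 k], ht0 k, by ring, rfl⟩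
      have := hDc.openSegment_closure_interior_subset_interior (hpmem l hl)
        (by rwa [hDo.interior_eq]) hseg
      rwa [hDo.interior_eq] at this
    set g : ℂ → ℂ := fun l => f (p l) with hgdef
    have hFd : ∀ k, DifferentiableOn ℂ (fun l => f (c k l)) (Metric.ball 0 ε) := by
      intro k
      have hcdiff : Differentiable ℂ (fun l : ℂ => c k l) := by
        have h1 : Differentiable ℂ (fun l : ℂ => z₀ + l • X) :=
          (differentiable_id.smul_const X).const_add z₀
        exact (h1.const_smul ((1 - t k) : ℝ)).add_const (t k • w)
      refine hf.comp hcdiff.differentiableOn ?_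
      intro l hl
      exact hmemD k l (le_of_lt (by simpa [Metric.mem_ball] using hl))
    have hdist : ∀ k, ∀ l : ℂ, ‖l‖ ≤ ε → dist (p l) (c k l) ≤ t k * (2 * r) := by
      intro k l hl
      have hkey : p l - c k l = t k • (p l - w) := by
        rw [hcdef]; simp only; module
      rw [dist_eq_norm, hkey, norm_smul, Real.norm_eq_abs,
        abs_of_pos (ht0 k)]
      have hplr : ‖p l‖ ≤ r := by
        have := hr (hpmem l hl); simpa [Metric.mem_closedBall] using this
      have : ‖p l - w‖ ≤ 2 * r := by
        calc ‖p l - w‖ ≤ ‖p l‖ + ‖w‖ := norm_sub_le _ _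
        _ ≤ 2 * r := by linarith
      exact mul_le_mul_of_nonneg_left this (le_of_lt (ht0 k))
    have hunif : TendstoUniformlyOn (fun k l => f (c k l)) g Filter.atTop
        (Metric.ball 0 ε) := by
      rw [Metric.tendstoUniformlyOn_iff]
      intro δ hδ
      obtain ⟨δ', hδ', hδ'2⟩ := huc δ hδ
      have hev : ∀ᶠ k in Filter.atTop, t k * (2 * r) < δ' := by
        have : Filter.Tendsto (fun k => t k * (2 * r)) Filter.atTop (nhds 0) := by
          simpa [htdef, one_div] using httend.mul_const (2 * r)
        exact this.eventually_lt_const hδ'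
      filter_upwards [hev] with k hk l hl
      have hl' : ‖l‖ ≤ ε := le_of_lt (by simpa [Metric.mem_ball] using hl)
      exact hδ'2 (p l) (hpmem l hl') (c k l) (subset_closure (hmemD k l hl'))
        (lt_of_le_of_lt (hdist k l hl') hk)
    have hgd : DifferentiableOn ℂ g (Metric.ball 0 ε) :=
      hunif.tendstoLocallyUniformlyOn.differentiableOn
        (Filter.Eventually.of_forall hFd) Metric.isOpen_ball
    have hg0 : g 0 = 1 := by simp [hgdef, hpdef, hfz₀]
    have hmax : IsMaxOn (norm ∘ g) (Metric.ball 0 ε) 0 := by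
      intro l hl
      have hl' : ‖l‖ ≤ ε := le_of_lt (by simpa [Metric.mem_ball] using hl)
      simp only [Function.comp, hg0, Set.mem_setOf_eq, norm_one]
      by_cases h : p l = z₀
      · simp [hgdef, h, hfz₀]
      · exact le_of_lt (hpeak (p l) (hpmem l hl') h)
    have heq := Complex.eqOn_of_isPreconnected_of_isMaxOn_norm
      (convex_ball (0:ℂ) ε).isPreconnected Metric.isOpen_ball hgd
      (Metric.mem_ball_self hε) hmax
    -- evaluate at l₀ = ε/2
    set l₀ : ℂ := ((ε / 2 : ℝ) : ℂ) with hl₀def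
    have hl₀n : ‖l₀‖ = ε / 2 := by
      rw [hl₀def, Complex.norm_real, Real.norm_eq_abs, abs_of_pos (half_pos hε)]
    have hl₀ball : l₀ ∈ Metric.ball (0:ℂ) ε := by
      rw [Metric.mem_ball, dist_zero_right, hl₀n]; linarith
    have hl₀ne : l₀ ≠ 0 := by
      simp [hl₀def, Complex.ext_iff]
      positivity
    have hpne : p l₀ ≠ z₀ := by
      simp only [hpdef, ne_eq, add_eq_left]
      exact fun h => hX0 ((smul_eq_zero.mp h).resolve_left hl₀ne)
    have hl₀norm : ‖l₀‖ ≤ ε := by rw [hl₀n]; linarith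
    have hlt := hpeak (p l₀) (hpmem l₀ hl₀norm) hpne
    have := heq hl₀ball
    simp only [Function.const, hg0] at this
    rw [hgdef] at this
    simp only at this
    rw [this] at hlt
    norm_num at hlt
  · rintro rfl
    exact ⟨1, one_pos, fun l _ => by simpa using hz₀⟩
end
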